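/- Let β > 0 and let g : (0,1) → ℝ be twice differentiable with |g''(u)| ≤ 2β/(u²(1−u)²) for all u ∈ (0,1). Then there exists a constant M ≥ 0 such that π(1−π)·|g'(π)| ≤ M for every π ∈ (0,1). -/

import Mathlib

open MeasureTheory intervalIntegral

set_option maxHeartbeats 1000000

/-- If `g` is twice differentiable on `(0,1)` with
`|g''(u)| ≤ 2β/(u²(1-u)²)`, then `p(1-p)|g'(p)|` is uniformly bounded on `(0,1)`. -/
theorem weighted_derivative_bounded
    (β : ℝ) (hβ : 0 < β) (g : ℝ → ℝ)
    (hg : ∀ u ∈ Set.Ioo (0 : ℝ) 1, DifferentiableAt ℝ g u)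
    (hg' : ∀ u ∈ Set.Ioo (0 : ℝ) 1, DifferentiableAt ℝ (deriv g) u)
    (hbound : ∀ u ∈ Set.Ioo (0 : ℝ) 1,
      |deriv (deriv g) u| ≤ 2 * β / (u ^ 2 * (1 - u) ^ 2)) :
    ∃ M : ℝ, 0 ≤ M ∧ ∀ p ∈ Set.Ioo (0 : ℝ) 1, p * (1 - p) * |deriv g p| ≤ M := by
  refine ⟨|deriv g (1/2)| + 8 * β, by positivity, ?_⟩
  intro p hp
  obtain ⟨hp0, hp1⟩ := hp
  have hmeas : Measurable (deriv (deriv g)) := measurable_deriv _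
  rcases le_or_gt p (1/2) with hle | hlt
  · -- p ≤ 1/2 ; integrate from p to 1/2
    have hsub : Set.uIcc p (1/2 : ℝ) ⊆ Set.Ioo (0:ℝ) 1 := by
      rw [Set.uIcc_of_le hle]
      intro x hx
      exact ⟨lt_of_lt_of_le hp0 hx.1, lt_of_le_of_lt hx.2 (by norm_num)⟩
    have hIoc : Set.uIoc p (1/2 : ℝ) = Set.Ioc p (1/2) := Set.uIoc_of_le hle
    have hint : IntervalIntegrable (deriv (deriv g)) volume p (1/2) := by
      rw [intervalIntegrable_iff, hIoc]
      refine ((integrableOn_const_iff (C := 8 * β / p ^ 2)).2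
        (Or.inr measure_Ioc_lt_top)).mono' hmeas.aestronglyMeasurable ?_
      refine (ae_restrict_iff' measurableSet_Ioc).2 (.of_forall fun x hx => ?_)
      have hx0 : 0 < x := lt_trans hp0 hx.1
      have hx1 : x < 1 := lt_of_le_of_lt hx.2 (by norm_num)
      have h1 := hbound x ⟨hx0, hx1⟩
      have hxp : p ≤ x := le_of_lt hx.1
      have hxu : x ≤ 1/2 := hx.2
      have hpos : 0 < x ^ 2 * (1 - x) ^ 2 :=
        mul_pos (pow_pos hx0 2) (pow_pos (by linarith) 2)
      have hden : p ^ 2 * (1/4 : ℝ) ≤ x ^ 2 * (1 - x) ^ 2 := by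
        nlinarith [sq_nonneg (1 - x - 1/2), sq_nonneg (x - p)]
      have : 2 * β / (x ^ 2 * (1 - x) ^ 2) ≤ 8 * β / p ^ 2 := by
        rw [div_le_div_iff₀ hpos (by positivity)]
        nlinarith [mul_le_mul_of_nonneg_left hden hβ.le]
      simpa [Real.norm_eq_abs] using h1.trans this
    have hftc : ∫ x in p..(1/2), deriv (deriv g) x =
        deriv g (1/2) - deriv g p :=
      integral_eq_sub_of_hasDerivAt (fun x hx => (hg' x (hsub hx)).hasDerivAt) hint
    have hcont : ContinuousOn (fun x : ℝ => 8 * β / x ^ 2) (Set.uIcc p (1/2)) := by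
      refine ContinuousOn.div continuousOn_const (by fun_prop) fun x hx => ?_
      exact pow_ne_zero _ (hsub hx).1.ne'
    have hintb : IntervalIntegrable (fun x : ℝ => 8 * β / x ^ 2) volume p (1/2) :=
      hcont.intervalIntegrable
    have hnorm : ‖∫ x in p..(1/2), deriv (deriv g) x‖ ≤
        ∫ x in p..(1/2), 8 * β / x ^ 2 := by
      refine (norm_integral_le_abs_of_norm_le ?_ hintb).trans_eq (abs_of_nonneg ?_)
      · refine (ae_restrict_iff' measurableSet_uIoc).2 (.of_forall fun x hx => ?_)
        rw [hIoc] at hx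
        have hx0 : 0 < x := lt_trans hp0 hx.1
        have hx1 : x < 1 := lt_of_le_of_lt hx.2 (by norm_num)
        have h1 := hbound x ⟨hx0, hx1⟩
        have hpos : 0 < x ^ 2 * (1 - x) ^ 2 :=
          mul_pos (pow_pos hx0 2) (pow_pos (by linarith) 2)
        have : 2 * β / (x ^ 2 * (1 - x) ^ 2) ≤ 8 * β / x ^ 2 := by
          rw [div_le_div_iff₀ hpos (by positivity)]
          have hxu : x ≤ 1/2 := hx.2
          have h4 : (0:ℝ) ≤ 4 * (1 - x) ^ 2 - 1 := by nlinarith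
          nlinarith [mul_nonneg (mul_nonneg hβ.le (sq_nonneg x)) h4]
        simpa [Real.norm_eq_abs] using h1.trans this
      · exact intervalIntegral.integral_nonneg hle fun x hx => by
          have hx0 : 0 < x := lt_of_lt_of_le hp0 hx.1
          positivity
    have hval : ∫ x in p..(1/2), 8 * β / x ^ 2 =
        (-(8*β) * (1/2:ℝ)⁻¹) - (-(8*β) * p⁻¹) := by
      refine integral_eq_sub_of_hasDerivAt (f := fun x : ℝ => -(8*β) * x⁻¹)
        (fun x hx => ?_) hintb
      have hx0 : (0:ℝ) < x := (hsub hx).1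
      have h := (hasDerivAt_inv hx0.ne').const_mul (-(8*β))
      convert h using 1
      · rfl
      ring
    have key : |deriv g p| ≤ |deriv g (1/2)| + 8 * β / p := by
      have h1 : |deriv g (1/2) - deriv g p| ≤ 8 * β / p := by
        rw [← hftc]
        refine hnorm.trans ?_
        rw [hval]
        have h12 : -(8*β) * ((1:ℝ)/2)⁻¹ = -(16*β) := by norm_num; ring
        have h13 : 8*β/p = 8*β*p⁻¹ := div_eq_mul_inv _ _
        rw [h12, h13]
        nlinarith
      calc |deriv g p| ≤ |deriv g (1/2)| + |deriv g (1/2) - deriv g p| := by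
            linarith [abs_sub_abs_le_abs_sub (deriv g p) (deriv g (1/2)),
              (abs_sub_comm (deriv g p) (deriv g (1/2))).le]
        _ ≤ |deriv g (1/2)| + 8 * β / p := by linarith
    have hpq : 0 < p * (1 - p) := by nlinarith
    have h2 : p * (1 - p) * |deriv g p| ≤ p * (1-p) * (|deriv g (1/2)| + 8 * β / p) :=
      mul_le_mul_of_nonneg_left key hpq.le
    refine h2.trans ?_
    have hexp : p * (1-p) * (|deriv g (1/2)| + 8 * β / p)
        = p * (1-p) * |deriv g (1/2)| + (1-p) * (8*β) := by
      rw [mul_add]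
      congr 1
      field_simp
    rw [hexp]
    have hA : (0:ℝ) ≤ 1 - p + p^2 := by nlinarith
    nlinarith [mul_nonneg (abs_nonneg (deriv g (1/2))) hA, mul_nonneg hβ.le hp0.le]
  · -- 1/2 < p ; integrate from 1/2 to p
    have hle : (1/2:ℝ) ≤ p := hlt.le
    have hp1' : (0:ℝ) < 1 - p := by linarith
    have hsub : Set.uIcc (1/2 : ℝ) p ⊆ Set.Ioo (0:ℝ) 1 := by
      rw [Set.uIcc_of_le hle]
      intro x hx
      exact ⟨lt_of_lt_of_le (by norm_num) hx.1, lt_of_le_of_lt hx.2 hp1⟩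
    have hIoc : Set.uIoc (1/2 : ℝ) p = Set.Ioc (1/2) p := Set.uIoc_of_le hle
    have hint : IntervalIntegrable (deriv (deriv g)) volume (1/2) p := by
      rw [intervalIntegrable_iff, hIoc]
      refine ((integrableOn_const_iff (C := 8 * β / (1-p) ^ 2)).2
        (Or.inr measure_Ioc_lt_top)).mono' hmeas.aestronglyMeasurable ?_
      refine (ae_restrict_iff' measurableSet_Ioc).2 (.of_forall fun x hx => ?_)
      have hx0 : 0 < x := lt_trans (by norm_num) hx.1
      have hx1 : x < 1 := lt_of_le_of_lt hx.2 hp1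
      have h1 := hbound x ⟨hx0, hx1⟩
      have hpos : 0 < x ^ 2 * (1 - x) ^ 2 :=
        mul_pos (pow_pos hx0 2) (pow_pos (by linarith) 2)
      have hxl : 1/2 < x := hx.1
      have hxu : x ≤ p := hx.2
      have hA : (1-p)^2 ≤ (1-x)^2 := by nlinarith
      have hB : (0:ℝ) ≤ 4 * x^2 - 1 := by nlinarith
      have : 2 * β / (x ^ 2 * (1 - x) ^ 2) ≤ 8 * β / (1-p) ^ 2 := by
        rw [div_le_div_iff₀ hpos (by positivity)]
        nlinarith [mul_le_mul_of_nonneg_left hA hβ.le,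
          mul_nonneg (mul_nonneg hβ.le (sq_nonneg (1-x))) hB]
      simpa [Real.norm_eq_abs] using h1.trans this
    have hftc : ∫ x in (1/2 : ℝ)..p, deriv (deriv g) x =
        deriv g p - deriv g (1/2) :=
      integral_eq_sub_of_hasDerivAt (fun x hx => (hg' x (hsub hx)).hasDerivAt) hint
    have hcont : ContinuousOn (fun x : ℝ => 8 * β / (1-x) ^ 2) (Set.uIcc (1/2:ℝ) p) := by
      refine ContinuousOn.div continuousOn_const (by fun_prop) fun x hx => ?_
      have hx1 : x < 1 := (hsub hx).2
      exact pow_ne_zero _ (by linarith)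
    have hintb : IntervalIntegrable (fun x : ℝ => 8 * β / (1-x) ^ 2) volume (1/2) p :=
      hcont.intervalIntegrable
    have hnorm : ‖∫ x in (1/2:ℝ)..p, deriv (deriv g) x‖ ≤
        ∫ x in (1/2:ℝ)..p, 8 * β / (1-x) ^ 2 := by
      refine (norm_integral_le_abs_of_norm_le ?_ hintb).trans_eq (abs_of_nonneg ?_)
      · refine (ae_restrict_iff' measurableSet_uIoc).2 (.of_forall fun x hx => ?_)
        rw [hIoc] at hx
        have hx0 : 0 < x := lt_trans (by norm_num) hx.1
        have hx1 : x < 1 := lt_of_le_of_lt hx.2 hp1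
        have h1 := hbound x ⟨hx0, hx1⟩
        have hpos : 0 < x ^ 2 * (1 - x) ^ 2 :=
          mul_pos (pow_pos hx0 2) (pow_pos (by linarith) 2)
        have hxl : 1/2 < x := hx.1
        have hB : (0:ℝ) ≤ 4 * x^2 - 1 := by nlinarith
        have : 2 * β / (x ^ 2 * (1 - x) ^ 2) ≤ 8 * β / (1-x) ^ 2 := by
          rw [div_le_div_iff₀ hpos (pow_pos (by linarith) 2)]
          nlinarith [mul_nonneg (mul_nonneg hβ.le (sq_nonneg (1-x))) hB]
        simpa [Real.norm_eq_abs] using h1.trans this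
      · exact intervalIntegral.integral_nonneg hle fun x hx => by
          have hx1 : x < 1 := lt_of_le_of_lt hx.2 hp1
          have : (0:ℝ) < 1 - x := by linarith
          positivity
    have hval : ∫ x in (1/2:ℝ)..p, 8 * β / (1-x) ^ 2 =
        ((8*β) * (1-p)⁻¹) - ((8*β) * (1-(1/2:ℝ))⁻¹) := by
      refine integral_eq_sub_of_hasDerivAt (f := fun x : ℝ => (8*β) * (1-x)⁻¹)
        (fun x hx => ?_) hintb
      have hx1 : x < 1 := (hsub hx).2
      have hne : (1 - x : ℝ) ≠ 0 := by linarith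
      have h1 : HasDerivAt (fun x : ℝ => (1 - x)) (-1) x := by
        simpa using (hasDerivAt_id x).const_sub 1
      have h := (((hasDerivAt_inv hne).comp x h1)).const_mul (8*β)
      convert h using 1
      · rfl
      · rfl
      ring
    have key : |deriv g p| ≤ |deriv g (1/2)| + 8 * β / (1-p) := by
      have h1 : |deriv g p - deriv g (1/2)| ≤ 8 * β / (1-p) := by
        rw [← hftc]
        refine hnorm.trans ?_
        rw [hval]
        have h12 : (8*β) * ((1:ℝ)-1/2)⁻¹ = 16*β := by norm_num; ring
        have h13 : 8*β/(1-p) = 8*β*(1-p)⁻¹ := div_eq_mul_inv _ _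
        rw [h12, h13]
        nlinarith
      calc |deriv g p| ≤ |deriv g (1/2)| + |deriv g p - deriv g (1/2)| := by
            linarith [abs_sub_abs_le_abs_sub (deriv g p) (deriv g (1/2))]
        _ ≤ |deriv g (1/2)| + 8 * β / (1-p) := by linarith
    have hpq : 0 < p * (1 - p) := by nlinarith
    have h2 : p * (1 - p) * |deriv g p| ≤ p * (1-p) * (|deriv g (1/2)| + 8 * β / (1-p)) :=
      mul_le_mul_of_nonneg_left key hpq.le
    refine h2.trans ?_
    have hexp : p * (1-p) * (|deriv g (1/2)| + 8 * β / (1-p))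
        = p * (1-p) * |deriv g (1/2)| + p * (8*β) := by
      rw [mul_add]
      congr 1
      field_simp
    rw [hexp]
    have hA : (0:ℝ) ≤ 1 - p + p^2 := by nlinarith
    nlinarith [mul_nonneg (abs_nonneg (deriv g (1/2))) hA, mul_nonneg hβ.le hp1'.le]
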